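/- With notation as above, for k > 2 the set B₁ = { a ∈ A_ν : L_k(a) ≤ 1, ‖a‖ ≤ 1 } is totally bounded in the operator norm, where L_k((a_{ij})) = sup_{i,j≥1} (i+j)^k (L(a_{ij}) + |ν(a_{ij})|) and L_k(I) = 0. -/

import Mathlib

open scoped InnerProductSpace

open Pointwise

section AuxTB

/-- If every point of `s` is within `ε` of a totally bounded set, `s` is totally bounded. -/
theorem totallyBounded_of_eps_approx {X : Type*} [PseudoMetricSpace X] {s : Set X}
    (h : ∀ ε : ℝ, 0 < ε → ∃ T : Set X, TotallyBounded T ∧ ∀ x ∈ s, ∃ y ∈ T, dist x y ≤ ε) :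
    TotallyBounded s := by
  rw [Metric.totallyBounded_iff]
  intro ε hε
  obtain ⟨T, hT, happ⟩ := h (ε / 3) (by linarith)
  obtain ⟨F, hF, hcov⟩ := Metric.totallyBounded_iff.1 hT (ε / 3) (by linarith)
  refine ⟨F, hF, fun x hx => ?_⟩
  obtain ⟨y, hyT, hxy⟩ := happ x hx
  obtain ⟨z, hzF, hyz⟩ := Set.mem_iUnion₂.1 (hcov hyT)
  refine Set.mem_iUnion₂.2 ⟨z, hzF, ?_⟩
  have : dist x z ≤ dist x y + dist y z := dist_triangle x y z
  have hyz' : dist y z < ε / 3 := Metric.mem_ball.1 hyz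
  exact Metric.mem_ball.2 (by linarith)

/-- Sum of two totally bounded sets in a seminormed group is totally bounded. -/
theorem TotallyBounded.add_set {E : Type*} [SeminormedAddCommGroup E] {s t : Set E}
    (hs : TotallyBounded s) (ht : TotallyBounded t) : TotallyBounded (s + t) := by
  rw [Metric.totallyBounded_iff] at hs ht ⊢
  intro ε hε
  obtain ⟨A, hA, hAc⟩ := hs (ε / 2) (by linarith)
  obtain ⟨B, hB, hBc⟩ := ht (ε / 2) (by linarith)
  refine ⟨A + B, hA.add hB, ?_⟩
  rintro x ⟨a, ha, b, hb, rfl⟩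
  obtain ⟨a', ha', haa⟩ := Set.mem_iUnion₂.1 (hAc ha)
  obtain ⟨b', hb', hbb⟩ := Set.mem_iUnion₂.1 (hBc hb)
  refine Set.mem_iUnion₂.2 ⟨a' + b', Set.add_mem_add ha' hb', Metric.mem_ball.2 ?_⟩
  calc dist (a + b) (a' + b') ≤ dist a a' + dist b b' := dist_add_add_le a b a' b'
    _ < ε / 2 + ε / 2 := add_lt_add (Metric.mem_ball.1 haa) (Metric.mem_ball.1 hbb)
    _ = ε := by ring

theorem totallyBounded_finsetSum {E : Type*} [SeminormedAddCommGroup E] {ι : Type*}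
    (s : Finset ι) (f : ι → Set E) (h : ∀ i ∈ s, TotallyBounded (f i)) :
    TotallyBounded (∑ i ∈ s, f i) := by
  classical
  induction s using Finset.induction with
  | empty =>
      rw [Finset.sum_empty]
      have : (0 : Set E) = {0} := Set.singleton_zero.symm
      rw [this]
      exact totallyBounded_singleton (0 : E)
  | @insert a s ha ih =>
      rw [Finset.sum_insert ha]
      exact (h a (Finset.mem_insert_self a s)).add_set
        (ih fun i hi => h i (Finset.mem_insert_of_mem hi))

theorem mem_finsetSum_sets {E : Type*} [AddCommMonoid E] {ι : Type*}
    (s : Finset ι) (f : ι → Set E) (g : ι → E) (h : ∀ i ∈ s, g i ∈ f i) :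
    (∑ i ∈ s, g i) ∈ ∑ i ∈ s, f i := by
  classical
  induction s using Finset.induction with
  | empty => simp
  | @insert a s ha ih =>
      rw [Finset.sum_insert ha, Finset.sum_insert ha]
      exact Set.add_mem_add (h a (Finset.mem_insert_self a s))
        (ih fun i hi => h i (Finset.mem_insert_of_mem hi))

end AuxTB

set_option linter.unusedSectionVars false
section Ops

variable {H : Type*} [NormedAddCommGroup H] [InnerProductSpace ℂ H] [CompleteSpace H]

local notation "ℓ²H" => lp (fun _ : ℕ => H) 2

/-- Coordinate projection as a continuous linear map. -/
noncomputable def lpProjCLM (j : ℕ) : ℓ²H →L[ℂ] H :=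
  LinearMap.mkContinuous
    { toFun := fun f => f j
      map_add' := fun f g => by
        change (↑(f + g) : ∀ _ : ℕ, H) j = (↑f : ∀ _ : ℕ, H) j + (↑g : ∀ _ : ℕ, H) j
        rw [lp.coeFn_add]; rfl
      map_smul' := fun c f => by
        change (↑(c • f) : ∀ _ : ℕ, H) j = c • (↑f : ∀ _ : ℕ, H) j
        rw [lp.coeFn_smul]; rfl }
    1 (fun f => by
      simpa using lp.norm_apply_le_norm (by norm_num : (2 : ENNReal) ≠ 0) f j)

@[simp] theorem lpProjCLM_apply (j : ℕ) (f : ℓ²H) : lpProjCLM (H := H) j f = f j := rfl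

/-- `lp.single` as a continuous linear map. -/
noncomputable def lpSingleCLM (i : ℕ) : H →L[ℂ] ℓ²H :=
  LinearMap.mkContinuous
    { toFun := fun u => lp.single 2 i u
      map_add' := fun u v => by
        apply lp.ext
        funext j
        by_cases h : j = i
        · subst h
          rw [lp.coeFn_add]
          simp [lp.single_apply_self]
        · rw [lp.coeFn_add]
          simp [lp.single_apply_ne _ _ _ h, h]
      map_smul' := fun c u => by
        simp [lp.single_smul] }
    1 (fun u => by
      have := lp.norm_single (p := 2) (E := fun _ : ℕ => H) (by norm_num) i u
      simpa using this.le)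

@[simp] theorem lpSingleCLM_apply (i : ℕ) (u : H) :
    lpSingleCLM (H := H) i u = lp.single 2 i u := rfl

/-- The elementary matrix operator: `f ↦ single i (a (f j))`. -/
noncomputable def entryOp (i j : ℕ) (a : H →L[ℂ] H) : ℓ²H →L[ℂ] ℓ²H :=
  (lpSingleCLM i).comp (a.comp (lpProjCLM j))

theorem entryOp_apply (i j : ℕ) (a : H →L[ℂ] H) (f : ℓ²H) :
    entryOp i j a f = lp.single 2 i (a (f j)) := rfl

theorem entryOp_sub (i j : ℕ) (a b : H →L[ℂ] H) :
    entryOp i j (a - b) = entryOp i j a - entryOp i j b := by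
  refine ContinuousLinearMap.ext fun f => ?_
  have h : lp.single (E := fun _ : ℕ => H) 2 i ((a (f j)) - (b (f j)))
      = lp.single 2 i (a (f j)) - lp.single 2 i (b (f j)) :=
    map_sub (lpSingleCLM (H := H) i) _ _
  simp [entryOp_apply, ContinuousLinearMap.sub_apply, h]

theorem entryOp_norm_le (i j : ℕ) (a : H →L[ℂ] H) : ‖entryOp i j a‖ ≤ ‖a‖ := by
  refine ContinuousLinearMap.opNorm_le_bound _ (norm_nonneg a) fun f => ?_
  rw [entryOp_apply]
  have h1 : ‖lp.single (E := fun _ : ℕ => H) 2 i (a (f j))‖ = ‖a (f j)‖ := by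
    simpa using lp.norm_single (p := 2) (E := fun _ : ℕ => H) (by norm_num) (fun _ => a (f j)) i
  rw [h1]
  calc ‖a (f j)‖ ≤ ‖a‖ * ‖f j‖ := a.le_opNorm _
    _ ≤ ‖a‖ * ‖f‖ := by
        gcongr
        exact lp.norm_apply_le_norm (by norm_num : (2 : ENNReal) ≠ 0) f j

theorem entryOp_lipschitz (i j : ℕ) : LipschitzWith 1 (entryOp (H := H) i j) := by
  refine LipschitzWith.of_dist_le_mul fun a b => ?_
  rw [dist_eq_norm, dist_eq_norm, ← entryOp_sub, NNReal.coe_one, one_mul]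
  exact entryOp_norm_le i j (a - b)

theorem norm_smul_real_clm (t : ℝ) (x : ℓ²H →L[ℂ] ℓ²H) : ‖t • x‖ = ‖t‖ * ‖x‖ := by
  have e : t • x = (t : ℂ) • x :=
    ContinuousLinearMap.ext fun f => (Complex.coe_smul t (x f)).symm
  rw [e, norm_smul, Complex.norm_real]

end Ops

section KeyNorm

variable {H : Type*} [NormedAddCommGroup H] [InnerProductSpace ℂ H] [CompleteSpace H]

local notation "ℓ²H" => lp (fun _ : ℕ => H) 2

/-- An operator whose "matrix columns" are given by `dm` with summable norm bounds `c`
has operator norm at most `∑' p, c p`. -/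
theorem opNorm_le_of_matrix (D : ℓ²H →L[ℂ] ℓ²H)
    (dm : ℕ → ℕ → (H →L[ℂ] H)) (c : ℕ × ℕ → ℝ)
    (hdm : ∀ i j, ‖dm i j‖ ≤ c (i, j))
    (hsum : Summable c)
    (hcoord : ∀ (i j : ℕ) (v : H), (D (lp.single 2 j v) : ∀ _ : ℕ, H) i = dm i j v) :
    ‖D‖ ≤ ∑' p, c p := by
  have two_ne_top : (2 : ENNReal) ≠ ⊤ := by norm_num
  have hc0 : ∀ p : ℕ × ℕ, 0 ≤ c p := fun p =>
    (norm_nonneg (dm p.1 p.2)).trans (by simpa using hdm p.1 p.2)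
  -- column summability and marginal sums
  have hswap : Summable (fun q : ℕ × ℕ => c (q.2, q.1)) := by
    have := (Equiv.prodComm ℕ ℕ).summable_iff (f := c)
    exact this.2 hsum
  have hmarg := (summable_prod_of_nonneg (f := fun q : ℕ × ℕ => c (q.2, q.1))
    (fun q => hc0 _)).1 hswap
  have hcol : ∀ j, Summable fun i => c (i, j) := fun j => hmarg.1 j
  have hcolsum : Summable fun j => ∑' i, c (i, j) := hmarg.2
  have hcol0 : ∀ j, 0 ≤ ∑' i, c (i, j) := fun j => tsum_nonneg fun i => hc0 _
  have htsum_eq : ∑' j, ∑' i, c (i, j) = ∑' p, c p := by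
    rw [← (Equiv.prodComm ℕ ℕ).tsum_eq c]
    exact (Summable.tsum_prod' hswap (fun j => hcol j)).symm
  -- step 1 : column estimate
  have key1 : ∀ (j : ℕ) (v : H), ‖D (lp.single 2 j v)‖ ≤ (∑' i, c (i, j)) * ‖v‖ := by
    intro j v
    set w := D (lp.single 2 j v) with hw
    have hhs : HasSum (fun i : ℕ => lp.single 2 i (w i)) w := lp.hasSum_single two_ne_top w
    have hn : ∀ i : ℕ, ‖lp.single (E := fun _ : ℕ => H) 2 i (w i)‖ = ‖dm i j v‖ := by
      intro i
      have h1 : ‖lp.single (E := fun _ : ℕ => H) 2 i (w i)‖ = ‖(w : ∀ _ : ℕ, H) i‖ :=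
        lp.norm_single (p := 2) (E := fun _ : ℕ => H) (by norm_num) i (w i)
      rw [h1, hcoord i j v]
    have hb : ∀ i : ℕ, ‖lp.single (E := fun _ : ℕ => H) 2 i (w i)‖ ≤ c (i, j) * ‖v‖ := by
      intro i
      rw [hn i]
      calc ‖dm i j v‖ ≤ ‖dm i j‖ * ‖v‖ := (dm i j).le_opNorm v
        _ ≤ c (i, j) * ‖v‖ := by gcongr; exact hdm i j
    have hsn : Summable fun i : ℕ => ‖lp.single (E := fun _ : ℕ => H) 2 i (w i)‖ :=
      Summable.of_nonneg_of_le (fun i => norm_nonneg _) hb ((hcol j).mul_right ‖v‖)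
    calc ‖w‖ = ‖∑' i, lp.single (E := fun _ : ℕ => H) 2 i (w i)‖ := by rw [hhs.tsum_eq]
      _ ≤ ∑' i, ‖lp.single (E := fun _ : ℕ => H) 2 i (w i)‖ := norm_tsum_le_tsum_norm hsn
      _ ≤ ∑' i, c (i, j) * ‖v‖ := Summable.tsum_le_tsum hb hsn ((hcol j).mul_right ‖v‖)
      _ = (∑' i, c (i, j)) * ‖v‖ := tsum_mul_right
  -- step 2 : full estimate
  refine D.opNorm_le_bound (tsum_nonneg hc0) fun f => ?_
  have hf : HasSum (fun j : ℕ => lp.single 2 j (f j)) f := lp.hasSum_single two_ne_top f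
  have hDf : HasSum (fun j : ℕ => D (lp.single 2 j (f j))) (D f) := hf.mapL D
  have hfb : ∀ j : ℕ, ‖(f : ∀ _ : ℕ, H) j‖ ≤ ‖f‖ := fun j =>
    lp.norm_apply_le_norm (by norm_num : (2 : ENNReal) ≠ 0) f j
  have hb1 : ∀ j : ℕ, ‖D (lp.single 2 j (f j))‖ ≤ (∑' i, c (i, j)) * ‖f‖ := fun j =>
    (key1 j (f j)).trans (mul_le_mul_of_nonneg_left (hfb j) (hcol0 j))
  have hsn : Summable fun j : ℕ => ‖D (lp.single 2 j (f j))‖ :=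
    Summable.of_nonneg_of_le (fun j => norm_nonneg _) hb1 (hcolsum.mul_right ‖f‖)
  calc ‖D f‖ = ‖∑' j, D (lp.single 2 j (f j))‖ := by rw [hDf.tsum_eq]
    _ ≤ ∑' j, ‖D (lp.single 2 j (f j))‖ := norm_tsum_le_tsum_norm hsn
    _ ≤ ∑' j, (∑' i, c (i, j)) * ‖f‖ := Summable.tsum_le_tsum hb1 hsn (hcolsum.mul_right ‖f‖)
    _ = (∑' j, ∑' i, c (i, j)) * ‖f‖ := tsum_mul_right
    _ = (∑' p, c p) * ‖f‖ := by rw [htsum_eq]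

end KeyNorm

section Summab

theorem summable_shift32 : Summable (fun n : ℕ => ((n : ℝ) + 1) ^ (-(3/2) : ℝ)) := by
  have h0 : Summable (fun n : ℕ => (n : ℝ) ^ (-(3/2) : ℝ)) :=
    Real.summable_nat_rpow.2 (by norm_num)
  have h1 := (summable_nat_add_iff (f := fun n : ℕ => (n : ℝ) ^ (-(3/2) : ℝ)) 1).2 h0
  refine h1.congr fun n => ?_
  push_cast
  ring_nf

theorem shift32_nonneg : ∀ n : ℕ, 0 ≤ ((n : ℝ) + 1) ^ (-(3/2) : ℝ) := fun n =>
  Real.rpow_nonneg (by positivity) _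

theorem weight_bound {k : ℕ} (hk : 2 < k) (i j : ℕ) :
    (1 : ℝ) / (((i : ℝ) + 1) + ((j : ℝ) + 1)) ^ k ≤
      ((i : ℝ) + 1) ^ (-(3/2) : ℝ) * ((j : ℝ) + 1) ^ (-(3/2) : ℝ) := by
  have hi : (0 : ℝ) ≤ (i : ℝ) := Nat.cast_nonneg i
  have hj : (0 : ℝ) ≤ (j : ℝ) := Nat.cast_nonneg j
  set a : ℝ := (i : ℝ) + 1 with ha'
  set b : ℝ := (j : ℝ) + 1 with hb'
  have ha : 1 ≤ a := by simp [ha']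
  have hb : 1 ≤ b := by simp [hb']
  have ha0 : 0 < a := by linarith
  have hb0 : 0 < b := by linarith
  have hab0 : 0 < a * b := mul_pos ha0 hb0
  have hs1 : 1 ≤ a + b := by linarith
  have h1 : a * b ≤ (a + b) ^ 2 := by nlinarith
  have h2 : (a * b) ^ ((3 : ℝ)/2) ≤ ((a + b) ^ 2) ^ ((3 : ℝ)/2) :=
    Real.rpow_le_rpow hab0.le h1 (by norm_num)
  have h3 : ((a + b) ^ 2) ^ ((3 : ℝ)/2) = (a + b) ^ (3 : ℝ) := by
    rw [← Real.rpow_natCast (a + b) 2, ← Real.rpow_mul (by linarith)]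
    norm_num
  have h4 : (a + b) ^ (3 : ℝ) ≤ (a + b) ^ (k : ℝ) :=
    Real.rpow_le_rpow_of_exponent_le hs1 (by exact_mod_cast hk)
  have h5 : (a * b) ^ ((3 : ℝ)/2) ≤ (a + b) ^ k := by
    rw [← Real.rpow_natCast (a + b) k]
    exact (h2.trans_eq h3).trans h4
  have h6 : a ^ (-(3/2) : ℝ) * b ^ (-(3/2) : ℝ) = 1 / (a * b) ^ ((3 : ℝ)/2) := by
    rw [← Real.mul_rpow ha0.le hb0.le, Real.rpow_neg hab0.le, one_div]
  rw [h6]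
  refine one_div_le_one_div_of_le (Real.rpow_pos_of_pos hab0 _) h5

end Summab

set_option maxHeartbeats 1000000 in
set_option synthInstance.maxHeartbeats 400000 in
/- STATEMENT 6: For k > 2 the set B₁ = { a ∈ A_ν : L_k(a) ≤ 1, ‖a‖ ≤ 1 } is totally
   bounded in the operator norm.  Elements of A_ν are operators on ℓ²(ℕ)⊗H of the form
   G̃ + t·I where G̃ has a symmetric matrix (m_{ij}) of selfadjoint entries in Lip(A)
   with all weighted sups finite; L_k(G̃ + tI) ≤ 1 is encoded entrywise as
   (i+j)^k (L(m_{ij}) + |ν(m_{ij})|) ≤ 1.  Indices are one-based via i+1, j+1. -/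
theorem ball_of_Ak_totallyBounded
    {H : Type*} [NormedAddCommGroup H] [InnerProductSpace ℂ H] [CompleteSpace H]
    (LipA : Submodule ℝ (H →L[ℂ] H))
    (L : (H →L[ℂ] H) → ℝ) (hLnonneg : ∀ x, 0 ≤ L x)
    (hLhom : ∀ (t : ℝ) (x : H →L[ℂ] H), L (t • x) = |t| * L x)
    (hLtri : ∀ x y : H →L[ℂ] H, L (x + y) ≤ L x + L y)
    -- ν is a state on A
    (ν : (H →L[ℂ] H) →L[ℂ] ℂ) (hν1 : ν 1 = 1) (hνnorm : ∀ x, ‖ν x‖ ≤ ‖x‖)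
    (hνpos : ∀ x : H →L[ℂ] H, x.IsPositive → 0 ≤ (ν x).re ∧ (ν x).im = 0)
    -- the basic estimate coming from the finite diameter d of (Lip(A), L)
    (d : ℝ) (hd0 : 0 ≤ d)
    (hbound : ∀ x ∈ LipA, ‖x‖ ≤ (L x + ‖ν x‖) * (1 + d))
    -- (Lip(A), L) is a compact quantum metric space: its unit Lip/norm ball is
    -- totally bounded (Rieffel's criterion)
    (hTB : TotallyBounded {x : H →L[ℂ] H | x ∈ LipA ∧ L x ≤ 1 ∧ ‖x‖ ≤ 1})
    (k : ℕ) (hk : 2 < k) :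
    TotallyBounded {G : lp (fun _ : ℕ => H) 2 →L[ℂ] lp (fun _ : ℕ => H) 2 |
      ‖G‖ ≤ 1 ∧
      ∃ (t : ℝ) (m : ℕ → ℕ → (H →L[ℂ] H)),
        -- G - t·I has matrix (m_{ij})
        (∀ (i j : ℕ) (u v : H),
          ⟪lp.single 2 i u, (G - t • 1) (lp.single 2 j v)⟫_ℂ = ⟪u, m i j v⟫_ℂ) ∧
        (∀ i j, m i j ∈ LipA) ∧
        (∀ i j, ContinuousLinearMap.adjoint (m i j) = m i j) ∧
        (∀ i j, m i j = m j i) ∧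
        -- all weighted sups are finite (membership in Ã_ν)
        (∀ l : ℕ, ∃ M : ℝ, ∀ i j : ℕ,
          ((i + 1 : ℝ) + (j + 1 : ℝ)) ^ l * (L (m i j) + ‖ν (m i j)‖) ≤ M) ∧
        -- L_k(G) ≤ 1
        (∀ i j : ℕ,
          ((i + 1 : ℝ) + (j + 1 : ℝ)) ^ k * (L (m i j) + ‖ν (m i j)‖) ≤ 1)} := by
  classical
  by_cases hns : Subsingleton (lp (fun _ : ℕ => H) 2 →L[ℂ] lp (fun _ : ℕ => H) 2)
  · exact Set.subsingleton_of_subsingleton.totallyBounded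
  have hnt : Nontrivial (lp (fun _ : ℕ => H) 2) := by
    by_contra hn
    rw [not_nontrivial_iff_subsingleton] at hn
    exact hns ⟨fun f g => ContinuousLinearMap.ext fun x => Subsingleton.elim _ _⟩
  have hnorm1 : ‖(1 : lp (fun _ : ℕ => H) 2 →L[ℂ] lp (fun _ : ℕ => H) 2)‖ = 1 := by
    rw [ContinuousLinearMap.one_def]
    exact ContinuousLinearMap.norm_id
  have h1d : (0 : ℝ) < 1 + d := by linarith
  -- the summable majorant
  set c : ℕ × ℕ → ℝ := fun p =>
    (1 + d) * (((p.1 : ℝ) + 1) ^ (-(3/2) : ℝ) * ((p.2 : ℝ) + 1) ^ (-(3/2) : ℝ)) with hc_def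
  have hc0 : ∀ p : ℕ × ℕ, 0 ≤ c p := fun p => by
    have := shift32_nonneg p.1
    have := shift32_nonneg p.2
    positivity
  have hsumc : Summable c := by
    have h := (summable_shift32.mul_of_nonneg summable_shift32
      (fun n => shift32_nonneg n) (fun n => shift32_nonneg n)).mul_left (1 + d)
    exact h
  set Sc : ℝ := ∑' p, c p with hSc_def
  have hSc0 : 0 ≤ Sc := tsum_nonneg hc0
  set C : ℝ := 1 + Sc with hC_def
  -- the scaled Lipschitz ball
  set Bset : Set (H →L[ℂ] H) := {x | x ∈ LipA ∧ L x ≤ 1 ∧ ‖x‖ ≤ 1} with hBset_def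
  set B' : Set (H →L[ℂ] H) := (fun x => (1 + d) • x) '' Bset with hB'_def
  have hB'tb : TotallyBounded B' :=
    hTB.image (lipschitzWith_smul (1 + d)).uniformContinuous
  have lip1 : LipschitzWith 1
      (fun t : ℝ => t • (1 : lp (fun _ : ℕ => H) 2 →L[ℂ] lp (fun _ : ℕ => H) 2)) := by
    refine LipschitzWith.of_dist_le_mul fun t s => ?_
    rw [dist_eq_norm, ← sub_smul, norm_smul_real_clm, hnorm1, mul_one, NNReal.coe_one, one_mul,
      Real.norm_eq_abs, Real.dist_eq]
  -- main approximation argument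
  apply totallyBounded_of_eps_approx
  intro ε hε
  obtain ⟨s0, hs0⟩ := summable_iff_vanishing_norm.1 hsumc ε hε
  set N : ℕ := s0.sup (fun p => max p.1 p.2) + 1 with hN_def
  set box : Finset (ℕ × ℕ) := Finset.range N ×ˢ Finset.range N with hbox_def
  have hs0box : s0 ⊆ box := by
    intro p hp
    have h1 : max p.1 p.2 ≤ s0.sup (fun q : ℕ × ℕ => max q.1 q.2) :=
      Finset.le_sup (f := fun q : ℕ × ℕ => max q.1 q.2) hp
    have h2 : p.1 ≤ s0.sup (fun q : ℕ × ℕ => max q.1 q.2) :=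
      le_trans (le_max_left _ _) h1
    have h3 : p.2 ≤ s0.sup (fun q : ℕ × ℕ => max q.1 q.2) :=
      le_trans (le_max_right _ _) h1
    rw [hbox_def, Finset.mem_product, Finset.mem_range, Finset.mem_range, hN_def]
    omega
  set T : Set (lp (fun _ : ℕ => H) 2 →L[ℂ] lp (fun _ : ℕ => H) 2) :=
    ((fun t : ℝ => t • (1 : lp (fun _ : ℕ => H) 2 →L[ℂ] lp (fun _ : ℕ => H) 2)) ''
        Set.Icc (-C) C)
      + ∑ p ∈ box, (entryOp p.1 p.2) '' B' with hT_def
  have hTtb : TotallyBounded T :=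
    (isCompact_Icc.totallyBounded.image lip1.uniformContinuous).add_set
      (totallyBounded_finsetSum box _ fun p _ =>
        hB'tb.image (entryOp_lipschitz p.1 p.2).uniformContinuous)
  refine ⟨T, hTtb, ?_⟩
  rintro G ⟨hG1, t, m, hmat, hmLip, _hadj, _hsymm, _hfin, hLk⟩
  -- entrywise bounds
  have hweights : ∀ i j : ℕ, L (m i j) + ‖ν (m i j)‖ ≤
      1 / (((i : ℝ) + 1) + ((j : ℝ) + 1)) ^ k := by
    intro i j
    have hw0 : (0 : ℝ) < (((i : ℝ) + 1) + ((j : ℝ) + 1)) ^ k := by positivity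
    rw [le_div_iff₀ hw0]
    have := hLk i j
    linarith [this]
  have hw1 : ∀ i j : ℕ, (1 : ℝ) ≤ (((i : ℝ) + 1) + ((j : ℝ) + 1)) ^ k := by
    intro i j
    have hbase : (1 : ℝ) ≤ ((i : ℝ) + 1) + ((j : ℝ) + 1) := by
      nlinarith [Nat.cast_nonneg (α := ℝ) i, Nat.cast_nonneg (α := ℝ) j]
    exact one_le_pow₀ hbase
  have hLν0 : ∀ i j : ℕ, 0 ≤ L (m i j) + ‖ν (m i j)‖ := fun i j =>
    add_nonneg (hLnonneg _) (norm_nonneg _)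
  have hLν1 : ∀ i j : ℕ, L (m i j) + ‖ν (m i j)‖ ≤ 1 := by
    intro i j
    refine (hweights i j).trans ?_
    rw [div_le_one (by positivity)]
    exact hw1 i j
  have hm_le1d : ∀ i j : ℕ, ‖m i j‖ ≤ 1 + d := by
    intro i j
    refine (hbound _ (hmLip i j)).trans ?_
    calc (L (m i j) + ‖ν (m i j)‖) * (1 + d) ≤ 1 * (1 + d) :=
          mul_le_mul_of_nonneg_right (hLν1 i j) h1d.le
      _ = 1 + d := one_mul _
  have hm_norm : ∀ i j : ℕ, ‖m i j‖ ≤ c (i, j) := by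
    intro i j
    refine (hbound _ (hmLip i j)).trans ?_
    have h1 : (L (m i j) + ‖ν (m i j)‖) * (1 + d) ≤
        (1 / (((i : ℝ) + 1) + ((j : ℝ) + 1)) ^ k) * (1 + d) :=
      mul_le_mul_of_nonneg_right (hweights i j) h1d.le
    refine h1.trans ?_
    rw [hc_def]
    have h2 := weight_bound hk i j
    calc (1 / (((i : ℝ) + 1) + ((j : ℝ) + 1)) ^ k) * (1 + d)
        ≤ (((i : ℝ) + 1) ^ (-(3/2) : ℝ) * ((j : ℝ) + 1) ^ (-(3/2) : ℝ)) * (1 + d) :=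
          mul_le_mul_of_nonneg_right h2 h1d.le
      _ = (1 + d) * (((i : ℝ) + 1) ^ (-(3/2) : ℝ) * ((j : ℝ) + 1) ^ (-(3/2) : ℝ)) := by ring
  -- matrix coordinates of G - t•1
  have hcoord : ∀ (i j : ℕ) (v : H),
      ((G - t • 1) (lp.single 2 j v) : ∀ _ : ℕ, H) i = m i j v := by
    intro i j v
    refine ext_inner_left ℂ fun u => ?_
    have h := hmat i j u v
    rw [lp.inner_single_left] at h
    exact h
  have hGt : ‖G - t • (1 : lp (fun _ : ℕ => H) 2 →L[ℂ] lp (fun _ : ℕ => H) 2)‖ ≤ Sc :=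
    opNorm_le_of_matrix _ m c hm_norm hsumc hcoord
  have ht : |t| ≤ C := by
    have h1 := norm_smul_real_clm t (1 : lp (fun _ : ℕ => H) 2 →L[ℂ] lp (fun _ : ℕ => H) 2)
    rw [hnorm1, mul_one, Real.norm_eq_abs] at h1
    have h2 : t • (1 : lp (fun _ : ℕ => H) 2 →L[ℂ] lp (fun _ : ℕ => H) 2)
        = G - (G - t • 1) := by abel
    calc |t| = ‖t • (1 : lp (fun _ : ℕ => H) 2 →L[ℂ] lp (fun _ : ℕ => H) 2)‖ := h1.symm
      _ = ‖G - (G - t • 1)‖ := by conv_lhs => rw [h2]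
      _ ≤ ‖G‖ + ‖G - t • 1‖ := norm_sub_le _ _
      _ ≤ 1 + Sc := add_le_add hG1 hGt
  -- the approximant
  set Y : lp (fun _ : ℕ => H) 2 →L[ℂ] lp (fun _ : ℕ => H) 2 :=
    t • 1 + ∑ p ∈ box, entryOp p.1 p.2 (m p.1 p.2) with hY_def
  have hYmem : Y ∈ T := by
    refine Set.add_mem_add ⟨t, Set.mem_Icc.2 (abs_le.1 ht), rfl⟩ ?_
    refine mem_finsetSum_sets box _ _ fun p _ => ?_
    refine ⟨m p.1 p.2, ?_, rfl⟩
    refine ⟨(1 + d)⁻¹ • m p.1 p.2, ⟨?_, ?_, ?_⟩, smul_inv_smul₀ h1d.ne' _⟩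
    · exact LipA.smul_mem _ (hmLip p.1 p.2)
    · rw [hLhom]
      have hinv : |(1 + d)⁻¹| = (1 + d)⁻¹ := abs_of_pos (by positivity)
      rw [hinv]
      calc (1 + d)⁻¹ * L (m p.1 p.2) ≤ 1 * 1 := by
            refine mul_le_mul ?_ ?_ (hLnonneg _) zero_le_one
            · exact inv_le_one_of_one_le₀ (by linarith)
            · exact le_trans (le_add_of_nonneg_right (norm_nonneg _)) (hLν1 p.1 p.2)
        _ = 1 := one_mul 1
    · rw [norm_smul, Real.norm_eq_abs, abs_of_pos (by positivity : (0:ℝ) < (1 + d)⁻¹)]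
      calc (1 + d)⁻¹ * ‖m p.1 p.2‖ ≤ (1 + d)⁻¹ * (1 + d) :=
            mul_le_mul_of_nonneg_left (hm_le1d p.1 p.2) (by positivity)
        _ = 1 := inv_mul_cancel₀ h1d.ne'
  -- coordinates of the error
  have hDcoord : ∀ (i j : ℕ) (v : H),
      ((G - Y) (lp.single 2 j v) : ∀ _ : ℕ, H) i
        = (if (i, j) ∈ box then (0 : H →L[ℂ] H) else m i j) v := by
    intro i j v
    have e0 : G - Y = (G - t • 1) - ∑ p ∈ box, entryOp p.1 p.2 (m p.1 p.2) := by
      rw [hY_def]; abel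
    have e1 : (G - Y) (lp.single 2 j v)
        = (G - t • 1) (lp.single 2 j v)
          - (∑ p ∈ box, entryOp p.1 p.2 (m p.1 p.2)) (lp.single 2 j v) := by
      rw [e0, ContinuousLinearMap.sub_apply]
    have e2 : ((∑ p ∈ box, entryOp p.1 p.2 (m p.1 p.2)) (lp.single 2 j v) : ∀ _ : ℕ, H) i
        = ∑ p ∈ box, ((entryOp p.1 p.2 (m p.1 p.2) (lp.single 2 j v) : ∀ _ : ℕ, H) i) := by
      rw [ContinuousLinearMap.sum_apply, lp.coeFn_sum, Finset.sum_apply]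
    have e3 : ∀ p : ℕ × ℕ,
        ((entryOp p.1 p.2 (m p.1 p.2) (lp.single 2 j v) : ∀ _ : ℕ, H) i)
          = if p = (i, j) then m i j v else 0 := by
      rintro ⟨p1, p2⟩
      rw [entryOp_apply]
      by_cases h2 : p2 = j
      · subst h2
        rw [lp.single_apply_self]
        by_cases h1 : p1 = i
        · subst h1
          rw [lp.single_apply_self, if_pos rfl]
        · rw [lp.single_apply_ne _ _ _ (Ne.symm h1), if_neg (by simp [h1])]
      · have hz : (lp.single (E := fun _ : ℕ => H) 2 j v : ∀ _ : ℕ, H) p2 = 0 :=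
          lp.single_apply_ne _ _ _ h2
        rw [hz, map_zero]
        have : lp.single (E := fun _ : ℕ => H) 2 p1 (0 : H) = 0 :=
          map_zero (lpSingleCLM (H := H) p1)
        rw [this]
        have : ((0 : lp (fun _ : ℕ => H) 2) : ∀ _ : ℕ, H) i = 0 := rfl
        rw [this, if_neg (by simp [h2])]
    have e4 : ∑ p ∈ box, ((entryOp p.1 p.2 (m p.1 p.2) (lp.single 2 j v) : ∀ _ : ℕ, H) i)
        = if (i, j) ∈ box then m i j v else 0 := by
      rw [Finset.sum_congr rfl fun p _ => e3 p]
      exact Finset.sum_ite_eq' box (i, j) (fun _ => m i j v)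
    have e5 : ((G - Y) (lp.single 2 j v) : ∀ _ : ℕ, H) i
        = m i j v - (if (i, j) ∈ box then m i j v else 0) := by
      rw [e1, lp.coeFn_sub, Pi.sub_apply, hcoord i j v, e2, e4]
    rw [e5]
    by_cases hb : (i, j) ∈ box
    · rw [if_pos hb, if_pos hb, sub_self, ContinuousLinearMap.zero_apply]
    · rw [if_neg hb, if_neg hb, sub_zero]
  -- the tail estimate
  set c' : ℕ × ℕ → ℝ := fun p => if p ∈ box then 0 else c p with hc'_def
  have hc'0 : ∀ p, 0 ≤ c' p := fun p => by
    rw [hc'_def]; dsimp only; split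
    · exact le_refl 0
    · exact hc0 p
  have hc'le : ∀ p, c' p ≤ c p := fun p => by
    rw [hc'_def]; dsimp only; split
    · exact hc0 p
    · exact le_refl _
  have hsumc' : Summable c' := Summable.of_nonneg_of_le hc'0 hc'le hsumc
  have hdm' : ∀ i j : ℕ, ‖(if (i, j) ∈ box then (0 : H →L[ℂ] H) else m i j)‖ ≤ c' (i, j) := by
    intro i j
    rw [hc'_def]; dsimp only
    by_cases hb : (i, j) ∈ box
    · rw [if_pos hb, if_pos hb, norm_zero]
    · rw [if_neg hb, if_neg hb]
      exact hm_norm i j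
  have hDle : ‖G - Y‖ ≤ ∑' p, c' p :=
    opNorm_le_of_matrix _ (fun i j => if (i, j) ∈ box then (0 : H →L[ℂ] H) else m i j)
      c' hdm' hsumc' (by
        intro i j v
        rw [hDcoord i j v])
  have htail : ∑' p, c' p ≤ ε := by
    refine Summable.tsum_le_of_sum_le hsumc' fun u => ?_
    have he : ∑ p ∈ u, c' p = ∑ p ∈ u.filter (fun p => p ∉ box), c p := by
      rw [Finset.sum_filter]
      refine Finset.sum_congr rfl fun p _ => ?_
      rw [hc'_def]; dsimp only
      by_cases hb : p ∈ box
      · rw [if_pos hb, if_neg (by simpa using hb)]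
      · rw [if_neg hb, if_pos hb]
    rw [he]
    have hdisj : Disjoint (u.filter (fun p => p ∉ box)) s0 := by
      rw [Finset.disjoint_left]
      intro p hp hps0
      exact (Finset.mem_filter.1 hp).2 (hs0box hps0)
    have := hs0 _ hdisj
    calc ∑ p ∈ u.filter (fun p => p ∉ box), c p
        ≤ |∑ p ∈ u.filter (fun p => p ∉ box), c p| := le_abs_self _
      _ = ‖∑ p ∈ u.filter (fun p => p ∉ box), c p‖ := (Real.norm_eq_abs _).symm
      _ ≤ ε := this.le
  exact ⟨Y, hYmem, by rw [dist_eq_norm]; exact hDle.trans htail⟩
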